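/- Let n ≥ 2 and λ ∈ ℂ^n with λ_n = 0. Suppose there exist p_1, …, p_{n−1} ∈ ℤ and m_1, …, m_{n−1} : Fin n → ℕ such that i p_j + ⟨m_j, λ⟩ = 0 for every j = 1, …, n−1, and such that the (n−1)×n rational matrix whose j-th row is (p_j, m_j(1), …, m_j(n−1)) has rank n−1. Then for every s ∈ Fin n there exists a rational number ν_s such that λ_s = ν_s · i. Here ⟨m,λ⟩ = Σ_j m_j λ_j. -/

import Mathlib

/-- Corollary 1.2 at the level of eigenvalues: assume `λ_n = 0` and there are
`n−1` resonance relations `i p_j + ⟨m_j, λ⟩ = 0` whose truncated coefficient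
matrix (rows `(p_j, m_j(1), …, m_j(n−1))`) has rank `n−1`. Then every `λ_s` is
a rational multiple of the imaginary unit `i`. -/
theorem stmt_13 {n : ℕ} (hn : 2 ≤ n) (lam : Fin n → ℂ)
    (hlast : lam ⟨n - 1, by omega⟩ = 0)
    (p : Fin (n - 1) → ℤ) (m : Fin (n - 1) → Fin n → ℕ)
    (hres : ∀ j : Fin (n - 1),
      Complex.I * (p j : ℂ) + ∑ s, (m j s : ℂ) * lam s = 0)
    (R : Matrix (Fin (n - 1)) (Fin n) ℚ)
    (hR : ∀ (j : Fin (n - 1)) (k : Fin n), R j k =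
      if (k : ℕ) = 0 then (p j : ℚ)
      else (m j ⟨(k : ℕ) - 1, Nat.lt_of_le_of_lt (Nat.sub_le _ _) k.isLt⟩ : ℚ))
    (hrank : R.rank = n - 1) :
    ∀ s : Fin n, ∃ q : ℚ, lam s = (q : ℂ) * Complex.I := by
  obtain ⟨n', rfl⟩ : ∃ n', n = n' + 1 := ⟨n - 1, by omega⟩
  set f := R.mulVecLin with hf
  -- rank-nullity
  have hrange : Module.finrank ℚ (LinearMap.range f) = n' := hrank
  have htot : Module.finrank ℚ (LinearMap.range f) + Module.finrank ℚ (LinearMap.ker f) = n' + 1 := by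
    rw [LinearMap.finrank_range_add_finrank_ker f, Module.finrank_fin_fun]
  have hker : Module.finrank ℚ (LinearMap.ker f) = 1 := by omega
  -- a spanning vector of the kernel
  obtain ⟨⟨w, hwmem⟩, hw0, hwspan⟩ :=
    (finrank_eq_one_iff' (K := ℚ) (V := LinearMap.ker f)).mp hker
  -- surjectivity and a right inverse
  have hsurj : LinearMap.range f = ⊤ := by
    apply Submodule.eq_top_of_finrank_eq
    rw [hrange, Module.finrank_fin_fun]
    omega
  obtain ⟨g, hg⟩ := f.exists_rightInverse_of_surjective hsurj
  set B := LinearMap.toMatrix' g with hBdef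
  have hRB : R * B = 1 := by
    apply Matrix.toLin'.injective
    rw [Matrix.toLin'_mul]
    show f ∘ₗ Matrix.toLin' B = _
    rw [hBdef, Matrix.toLin'_toMatrix', hg, Matrix.toLin'_one]
  set E : Matrix (Fin (n' + 1)) (Fin (n' + 1)) ℚ := 1 - B * R with hEdef
  have hRE : R * E = 0 := by
    rw [hEdef, Matrix.mul_sub, Matrix.mul_one, ← Matrix.mul_assoc, hRB, Matrix.one_mul, sub_self]
  -- each column of E is a rational multiple of w
  have hcol : ∀ l, ∃ c : ℚ, ∀ k, E k l = c * w k := by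
    intro l
    have hmem : (fun k => E k l) ∈ LinearMap.ker f := by
      rw [LinearMap.mem_ker]
      funext j
      have := congrFun (congrFun hRE j) l
      simpa [hf, Matrix.mul_apply, Matrix.mulVec, dotProduct] using this
    obtain ⟨c, hc⟩ := hwspan ⟨_, hmem⟩
    exact ⟨c, fun k => (congrFun (congrArg Subtype.val hc) k).symm⟩
  choose c hc using hcol
  -- the complex kernel vector
  set v : Fin (n' + 1) → ℂ := fun k =>
    if h : (k : ℕ) = 0 then 1
    else -Complex.I * lam ⟨(k : ℕ) - 1, Nat.lt_of_le_of_lt (Nat.sub_le _ _) k.isLt⟩ with hvdef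
  have hv0 : v 0 = 1 := by simp [hvdef]
  have hvsucc : ∀ i : Fin n', v i.succ = -Complex.I * lam (Fin.castSucc i) := by
    intro i
    simp only [hvdef, Fin.val_succ, Nat.add_sub_cancel]
    rw [dif_neg (by omega)]
    rfl
  -- v is in the complex kernel
  have hvker : ∀ j, ∑ k, (R j k : ℂ) * v k = 0 := by
    intro j
    have hres' := hres j
    rw [Fin.sum_univ_castSucc (f := fun s => (m j s : ℂ) * lam s)] at hres'
    have hlast' : lam (Fin.last n') = 0 := hlast
    rw [hlast', mul_zero, add_zero] at hres'
    rw [Fin.sum_univ_succ]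
    have h0 : (R j 0 : ℂ) = (p j : ℂ) := by rw [hR j 0]; norm_num
    have hsuc : ∀ i : Fin n', (R j i.succ : ℂ) * v i.succ
        = -Complex.I * ((m j (Fin.castSucc i) : ℂ) * lam (Fin.castSucc i)) := by
      intro i
      rw [hvsucc i, hR j i.succ, if_neg (by simp [Fin.val_succ])]
      have hidx : (⟨(i.succ : ℕ) - 1, Nat.lt_of_le_of_lt (Nat.sub_le _ _) i.succ.isLt⟩ :
          Fin (n' + 1)) = Fin.castSucc i := by
        apply Fin.ext
        simp [Fin.val_succ]
      rw [hidx]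
      push_cast
      ring
    rw [hv0, h0, Finset.sum_congr rfl fun i _ => hsuc i, ← Finset.mul_sum]
    linear_combination (-Complex.I) * hres' + (p j : ℂ) * Complex.I_sq
  -- v equals (E applied to v), hence is proportional to w
  set t : ℂ := ∑ l, (c l : ℂ) * v l with htdef
  have hvE : ∀ k, v k = (w k : ℂ) * t := by
    intro k
    have h1 : v k = ∑ l, ((E k l : ℚ) : ℂ) * v l := by
      have hE' : ∀ l, ((E k l : ℚ) : ℂ)
          = (if k = l then 1 else 0) - ∑ a, ((B k a : ℚ) : ℂ) * ((R a l : ℚ) : ℂ) := by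
        intro l
        rw [hEdef, Matrix.sub_apply, Matrix.one_apply, Matrix.mul_apply]
        push_cast [apply_ite]
        rfl
      rw [Finset.sum_congr rfl fun l _ => by rw [hE' l]]
      rw [Finset.sum_congr rfl fun l _ => sub_mul _ _ (v l), Finset.sum_sub_distrib]
      have hA : ∑ l, (if k = l then (1:ℂ) else 0) * v l = v k := by
        simp [ite_mul]
      have hBz : ∑ l, (∑ a, ((B k a : ℚ) : ℂ) * ((R a l : ℚ) : ℂ)) * v l = 0 := by
        rw [Finset.sum_congr rfl fun l _ => Finset.sum_mul _ _ (v l)]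
        rw [Finset.sum_comm]
        apply Finset.sum_eq_zero
        intro a _
        have : ∑ l, ((B k a : ℚ) : ℂ) * ((R a l : ℚ) : ℂ) * v l
            = ((B k a : ℚ) : ℂ) * ∑ l, ((R a l : ℚ) : ℂ) * v l := by
          rw [Finset.mul_sum]; exact Finset.sum_congr rfl fun l _ => by ring
        rw [this, hvker a, mul_zero]
      rw [hA, hBz, sub_zero]
    rw [h1, htdef, Finset.mul_sum]
    refine Finset.sum_congr rfl fun l _ => ?_
    rw [hc l k]
    push_cast
    ring
  have ht0 : (w 0 : ℂ) * t = 1 := by rw [← hvE 0, hv0]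
  have hw00 : ((w 0 : ℚ) : ℂ) ≠ 0 := by
    intro h
    rw [h, zero_mul] at ht0
    exact zero_ne_one ht0
  -- conclusion
  intro s
  rcases eq_or_lt_of_le (Nat.lt_succ_iff.mp s.isLt) with hs | hs
  · refine ⟨0, ?_⟩
    have hseq : s = ⟨n' + 1 - 1, by omega⟩ := Fin.ext (by simpa using hs)
    rw [hseq, hlast]
    simp
  · set i : Fin n' := ⟨(s : ℕ), hs⟩ with hi
    have hcs : Fin.castSucc i = s := Fin.ext rfl
    have hkey : -Complex.I * lam s = ((w i.succ / w 0 : ℚ) : ℂ) := by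
      rw [← hcs, ← hvsucc i, hvE i.succ]
      have htval : t = ((w 0 : ℚ) : ℂ)⁻¹ := eq_inv_of_mul_eq_one_left (by linear_combination ht0)
      rw [htval]
      push_cast
      field_simp
    exact ⟨w i.succ / w 0, by linear_combination Complex.I * hkey + lam s * Complex.I_sq⟩
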